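/- arXiv:1306.1428 — 7 statements merged into one kernel-verified Lean document; each statement's English description precedes it below -/
import Mathlib

section
/- Let B be a finite nonempty set of branches and S a finite nonempty set of switches of a combinatorial train track with incidence matrix L : S × B → ℤ, and write m = |S|. If the train track is not recurrent (i.e., it admits no transverse measure that is strictly positive on every branch), then every function u : B → ℝ with u(b) > 0 for all b ∈ B satisfies max_{s ∈ S} |(L·u)(s)| ≥ (min_{b ∈ B} u(b)) / m, where (L·u)(s) = Σ_{b ∈ B} L(s,b)·u(b). (This is the combinatorial content of Theorem 4.3; for train tracks on S_{g,p} one has m ≤ 12g+4p−12.) -/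
theorem aux_stiemke {B S : Type} [Fintype B] [Fintype S] [Nonempty B]
    (L : S → B → ℤ)
    (hnonrec : ¬ ∃ μ : B → ℝ,
      (∀ b, 0 ≤ μ b) ∧ (∀ s, ∑ b, (L s b : ℝ) * μ b = 0) ∧ (∀ b, 0 < μ b)) :
    ∃ y : S → ℝ, (∀ b, 0 ≤ ∑ s, (L s b : ℝ) * y s) ∧
      ∃ b0 : B, 0 < ∑ s, (L s b0 : ℝ) * y s := by
  classical
  by_contra hno
  push_neg at hno
  apply hnonrec
  let T : (S → ℝ) →ₗ[ℝ] (B → ℝ) :=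
  { toFun := fun y b => ∑ s, (L s b : ℝ) * y s
    map_add' := by
      intro x y; funext b; simp [mul_add, Finset.sum_add_distrib]
    map_smul' := by
      intro c x; funext b
      simp only [Pi.smul_apply, smul_eq_mul, RingHom.id_apply, Finset.mul_sum]
      exact Finset.sum_congr rfl fun s _ => by ring }
  set W := LinearMap.range T with hWdef
  have hWd : Disjoint (W : Set (B → ℝ)) (stdSimplex ℝ B) := by
    rw [Set.disjoint_left]
    rintro x ⟨y, rfl⟩ hx
    have h1 : ∀ b, 0 ≤ ∑ s, (L s b : ℝ) * y s := fun b => hx.1 b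
    have h2 := hno y h1
    have h3 : ∀ b, T y b = 0 := fun b => le_antisymm (h2 b) (h1 b)
    have h4 := hx.2
    rw [Finset.sum_congr rfl (fun b _ => h3 b)] at h4
    simp at h4
  obtain ⟨f, u', v, hfW, huv, hfΔ⟩ :=
    geometric_hahn_banach_closed_compact W.convex W.closed_of_finiteDimensional
      (convex_stdSimplex ℝ B) (isCompact_stdSimplex ℝ B) hWd
  have hf0 : ∀ w ∈ W, f w = 0 := by
    intro w hw
    by_contra h
    have h1 : ∀ r : ℝ, r * f w < u' := by
      intro r
      have := hfW (r • w) (W.smul_mem r hw)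
      simpa using this
    have h2 := h1 ((u' + 1) / f w)
    rw [div_mul_cancel₀ _ h] at h2
    linarith
  have hv : 0 < v := by
    have := hfW 0 W.zero_mem
    simp only [map_zero] at this
    linarith
  have hposμ : ∀ b : B, v < f (Pi.single b 1) := by
    intro b
    apply hfΔ
    constructor
    · intro i; by_cases hib : i = b <;> simp [Pi.single_apply, hib]
    · simp [Pi.single_apply]
  have hrep : ∀ x : B → ℝ, f x = ∑ b, x b * f (Pi.single b 1) := by
    intro x
    have hx : x = ∑ b, x b • (Pi.single b 1 : B → ℝ) := by
      funext j
      simp [Finset.sum_apply, Pi.single_apply, mul_ite]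
    conv_lhs => rw [hx]
    rw [map_sum]
    simp
  refine ⟨fun b => f (Pi.single b 1), fun b => (hv.trans (hposμ b)).le, ?_,
    fun b => hv.trans (hposμ b)⟩
  intro s0
  have hW' : (fun b => (L s0 b : ℝ)) ∈ W := by
    refine ⟨Pi.single s0 1, ?_⟩
    funext b
    simp [T, Pi.single_apply, mul_ite]
  calc ∑ b, (L s0 b : ℝ) * f (Pi.single b 1)
      = f (fun b => (L s0 b : ℝ)) := (hrep _).symm
    _ = 0 := hf0 _ hW'

theorem aux_col {B S : Type} [Fintype S] [DecidableEq S]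
    (att : B × Bool → S) (side : B × Bool → Bool) (L : S → B → ℤ)
    (hL : ∀ s b, L s b =
      ∑ e : Bool, (if att (b, e) = s then (if side (b, e) then (1 : ℤ) else -1) else 0))
    (y : S → ℝ) (b : B) :
    ∑ s, (L s b : ℝ) * y s
      = ∑ e : Bool, (if side (b, e) then (1 : ℝ) else -1) * y (att (b, e)) := by
  calc ∑ s, (L s b : ℝ) * y s
      = ∑ s, (∑ e : Bool,
          (if att (b, e) = s then (if side (b, e) then (1 : ℝ) else -1) else 0)) * y s := by
        refine Finset.sum_congr rfl fun s _ => ?_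
        congr 1
        rw [hL s b]
        push_cast
        ring
    _ = ∑ e : Bool, ∑ s,
          (if att (b, e) = s then (if side (b, e) then (1 : ℝ) else -1) else 0) * y s := by
        simp only [Finset.sum_mul]
        exact Finset.sum_comm
    _ = ∑ e : Bool, (if side (b, e) then (1 : ℝ) else -1) * y (att (b, e)) := by
        refine Finset.sum_congr rfl fun e _ => ?_
        simp [ite_mul, Finset.sum_ite_eq]


/-- Theorem 4.3, combinatorial content.
A combinatorial train track has a finite nonempty branch set `B` and a finite
nonempty switch set `S`; each branch `b` has two ends `(b, false)` and `(b, true)`,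
the attaching map `att` assigns to each end a switch, and the side map `side`
assigns to each end a side (`true` = "in", `false` = "out").  The incidence
matrix is `L s b = (# ends of b at s with side in) − (# ends of b at s with side out)`.
If the track is not recurrent, i.e. it admits no transverse measure (nonnegative
vector in the kernel of `L`) which is strictly positive on every branch, then for
every strictly positive `u : B → ℝ`,
`max_{s ∈ S} |(L·u)(s)| ≥ (min_{b ∈ B} u b) / |S|`. -/
theorem stmt_0 {B S : Type} [Fintype B] [Fintype S] [Nonempty B] [Nonempty S]
    [DecidableEq S]
    (att : B × Bool → S) (side : B × Bool → Bool)
    (L : S → B → ℤ)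
    (hL : ∀ s b, L s b =
      ∑ e : Bool, (if att (b, e) = s then (if side (b, e) then (1 : ℤ) else -1) else 0))
    (hnonrec : ¬ ∃ μ : B → ℝ,
      (∀ b, 0 ≤ μ b) ∧ (∀ s, ∑ b, (L s b : ℝ) * μ b = 0) ∧ (∀ b, 0 < μ b))
    (u : B → ℝ) (hu : ∀ b, 0 < u b) :
    (Finset.univ.inf' Finset.univ_nonempty u) / (Fintype.card S : ℝ) ≤
      Finset.univ.sup' Finset.univ_nonempty (fun s => |∑ b, (L s b : ℝ) * u b|) := by
  classical
  obtain ⟨y, hy, b0, hb0⟩ := aux_stiemke L hnonrec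
  set P : ℝ := (if side (b0, true) then (1 : ℝ) else -1) * y (att (b0, true)) with hPdef
  set Q : ℝ := (if side (b0, false) then (1 : ℝ) else -1) * y (att (b0, false)) with hQdef
  have hPQ : 0 < P + Q := by
    have := hb0
    rw [aux_col att side L hL y b0, Fintype.sum_bool] at this
    linarith
  set a : ℝ := max P Q with hadef
  set bb : ℝ := min P Q with hbbdef
  have hab1 : bb ≤ a := min_le_max
  have hab2 : a + bb = P + Q := max_add_min P Q
  set t : ℝ := if 0 < bb then bb / 2 else (a - bb) / 2 with htdef
  have ht : 0 ≤ t := by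
    rw [htdef]; split_ifs with h <;> linarith
  have hta : t < a := by
    rw [htdef]; split_ifs with h <;> linarith
  set F : ℝ → ℝ := fun x => if t < x then 1 else if x < -t then -1 else 0 with hFdef
  have hFodd : ∀ x : ℝ, F (-x) = -F x := by
    intro x
    simp only [hFdef]
    split_ifs <;> push_neg at * <;> first | linarith
  have hFsum : ∀ p q : ℝ, 0 ≤ p + q → 0 ≤ F p + F q := by
    intro p q h
    simp only [hFdef]
    split_ifs <;> push_neg at * <;> first | linarith
  have hFabs : ∀ x : ℝ, |F x| ≤ 1 := by
    intro x
    simp only [hFdef]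
    split_ifs <;> norm_num
  have hFa : F a = 1 := by simp [hFdef, hta]
  have hFbb : 0 ≤ F bb := by
    rcases lt_or_ge 0 bb with h | h
    · have htbb : t < bb := by rw [htdef, if_pos h]; linarith
      simp [hFdef, htbb]
    · have h1 : ¬ t < bb := by linarith
      have h2 : ¬ bb < -t := by
        rw [htdef, if_neg (not_lt.mpr h)]
        linarith
      simp [hFdef, h1, h2]
  have hFmul : ∀ (c : Bool) (x : ℝ),
      (if c then (1 : ℝ) else -1) * F x = F ((if c then (1 : ℝ) else -1) * x) := by
    intro c x
    cases c <;> simp [neg_one_mul, hFodd]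
  set y' : S → ℝ := fun s => F (y s) with hy'def
  have hcol' : ∀ b : B, ∑ s, (L s b : ℝ) * y' s =
      F ((if side (b, true) then (1 : ℝ) else -1) * y (att (b, true)))
      + F ((if side (b, false) then (1 : ℝ) else -1) * y (att (b, false))) := by
    intro b
    rw [aux_col att side L hL y' b, Fintype.sum_bool, hFmul, hFmul]
  have hy' : ∀ b : B, 0 ≤ ∑ s, (L s b : ℝ) * y' s := by
    intro b
    rw [hcol' b]
    apply hFsum
    have := hy b
    rw [aux_col att side L hL y b, Fintype.sum_bool] at this
    linarith
  have hyb0 : 1 ≤ ∑ s, (L s b0 : ℝ) * y' s := by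
    rw [hcol' b0]
    have hsw : F P + F Q = F a + F bb := by
      rcases le_total P Q with h | h
      · rw [hadef, hbbdef, max_eq_right h, min_eq_left h]; ring
      · rw [hadef, hbbdef, max_eq_left h, min_eq_right h]
    have : 1 ≤ F P + F Q := by rw [hsw, hFa]; linarith
    rw [← hPdef, ← hQdef]
    linarith
  -- Step 3 : the bound
  set M : ℝ := Finset.univ.sup' Finset.univ_nonempty
    (fun s => |∑ b, (L s b : ℝ) * u b|) with hMdef
  have hM0 : ∀ s : S, |∑ b, (L s b : ℝ) * u b| ≤ M :=
    fun s => Finset.le_sup' (fun s => |∑ b, (L s b : ℝ) * u b|) (Finset.mem_univ s)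
  have key1 : ∑ s, y' s * (∑ b, (L s b : ℝ) * u b)
      = ∑ b, (∑ s, (L s b : ℝ) * y' s) * u b := by
    simp only [Finset.mul_sum]
    rw [Finset.sum_comm]
    simp only [Finset.sum_mul]
    exact Finset.sum_congr rfl fun b _ => Finset.sum_congr rfl fun s _ => by ring
  have key2 : u b0 ≤ ∑ b, (∑ s, (L s b : ℝ) * y' s) * u b := by
    have h1 : ∀ b ∈ Finset.univ, 0 ≤ (∑ s, (L s b : ℝ) * y' s) * u b :=
      fun b _ => mul_nonneg (hy' b) (hu b).le
    have h2 := Finset.single_le_sum h1 (Finset.mem_univ b0)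
    have h3 : u b0 ≤ (∑ s, (L s b0 : ℝ) * y' s) * u b0 :=
      le_mul_of_one_le_left (hu b0).le hyb0
    linarith
  have key3 : ∑ s, y' s * (∑ b, (L s b : ℝ) * u b) ≤ (Fintype.card S : ℝ) * M := by
    calc ∑ s, y' s * (∑ b, (L s b : ℝ) * u b) ≤ ∑ _s : S, M := by
          refine Finset.sum_le_sum fun s _ => ?_
          calc y' s * (∑ b, (L s b : ℝ) * u b)
              ≤ |y' s * (∑ b, (L s b : ℝ) * u b)| := le_abs_self _
            _ = |y' s| * |∑ b, (L s b : ℝ) * u b| := abs_mul _ _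
            _ ≤ 1 * M := mul_le_mul (hFabs _) (hM0 s) (abs_nonneg _) zero_le_one
            _ = M := one_mul M
      _ = (Fintype.card S : ℝ) * M := by
          simp [Finset.sum_const, Finset.card_univ, nsmul_eq_mul]
  have hc : Finset.univ.inf' Finset.univ_nonempty u ≤ u b0 :=
    Finset.inf'_le u (Finset.mem_univ b0)
  have hm : (0 : ℝ) < (Fintype.card S : ℝ) := by
    exact_mod_cast Fintype.card_pos
  rw [div_le_iff₀ hm]
  nlinarith [key1, key2, key3, hc]
end

section
/- Let a combinatorial train track with branch set B, switch set S, and incidence matrix L : S × B → ℤ be given, and let b ∈ B be a branch that is contained in no closed train path. Then there exist a nonempty subset T ⊆ S and signs ε : T → {−1, +1} such that the vector V := Σ_{s ∈ T} ε(s)·L(s,·) ∈ ℤ^B has all coordinates ≥ 0 and satisfies V(b) ≥ 1; in particular V is a nonzero nonnegative vector in the row space of L. (Lemma 4.4: the reorientation of switches along the set Q of branches reachable from an end of b changes each affected row of L only by a sign, and the resulting sum of rows over the switches of Q is nonnegative and positive in the coordinate of b.) -/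
/-- A train path on a combinatorial train track with branch set `B`, switch set `S`,
attaching map `att` and side map `side`: a sequence of branches `bs 0, …, bs (k-1)`
(`k ≥ 1`) each traversed in the direction recorded by `ds` (the first end of the
`i`-th traversed branch is `(bs i, ds i)`, the second is `(bs i, !(ds i))`), such
that consecutive ends are attached at the same switch with opposite sides. -/
def IsTrainPath {B S : Type} (att : B × Bool → S) (side : B × Bool → Bool)
    (k : ℕ) (bs : ℕ → B) (ds : ℕ → Bool) : Prop :=
  1 ≤ k ∧ ∀ i, i + 1 < k →
    att (bs (i + 1), ds (i + 1)) = att (bs i, !(ds i)) ∧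
    side (bs (i + 1), ds (i + 1)) ≠ side (bs i, !(ds i))

/-- A closed train path: a train path whose final outgoing end and initial end are
attached at the same switch with opposite sides. -/
def IsClosedTrainPath {B S : Type} (att : B × Bool → S) (side : B × Bool → Bool)
    (k : ℕ) (bs : ℕ → B) (ds : ℕ → Bool) : Prop :=
  IsTrainPath att side k bs ds ∧
  att (bs 0, ds 0) = att (bs (k - 1), !(ds (k - 1))) ∧
  side (bs 0, ds 0) ≠ side (bs (k - 1), !(ds (k - 1)))



open Relation

section ttaux

variable {B S : Type}

/-- One step of a train path: from traversing branch `u.1` in direction `u.2`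
(exiting at end `(u.1, !u.2)`) we can continue by traversing `v.1` in direction
`v.2` (entering at end `v`). -/
def TTStep (att : B × Bool → S) (side : B × Bool → Bool) (u v : B × Bool) : Prop :=
  att v = att (u.1, !u.2) ∧ side v ≠ side (u.1, !u.2)

lemma ttstep_rev {att : B × Bool → S} {side : B × Bool → Bool} {u v : B × Bool}
    (h : TTStep att side u v) : TTStep att side (v.1, !v.2) (u.1, !u.2) := by
  obtain ⟨h1, h2⟩ := h
  constructor
  · simpa using h1.symm
  · simp only [Bool.not_not]
    exact fun hh => h2 hh.symm

lemma ttrtg_rev {att : B × Bool → S} {side : B × Bool → Bool} {u v : B × Bool}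
    (h : ReflTransGen (TTStep att side) u v) :
    ReflTransGen (TTStep att side) (v.1, !v.2) (u.1, !u.2) := by
  induction h with
  | refl => exact ReflTransGen.refl
  | tail _ hstep ih => exact ReflTransGen.head (ttstep_rev hstep) ih

lemma ttpath_fun {att : B × Bool → S} {side : B × Bool → Bool} {x u : B × Bool}
    (h : ReflTransGen (TTStep att side) x u) :
    ∃ (k : ℕ) (f : ℕ → B × Bool), 1 ≤ k ∧ f 0 = x ∧ f (k - 1) = u ∧
      ∀ i, i + 1 < k → TTStep att side (f i) (f (i + 1)) := by
  induction h with
  | refl => exact ⟨1, fun _ => x, le_refl 1, rfl, rfl, by omega⟩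
  | @tail w v hw hstep ih =>
      obtain ⟨k, f, hk, h0, hl, hs⟩ := ih
      refine ⟨k + 1, fun i => if i < k then f i else v, by omega, ?_, ?_, ?_⟩
      · simp only [if_pos (by omega : 0 < k)]; exact h0
      · simp
      · intro i hi
        by_cases h1 : i + 1 < k
        · simp only [if_pos (by omega : i < k), if_pos h1]
          exact hs i h1
        · have hik : i + 1 = k := by omega
          simp only [if_pos (by omega : i < k), if_neg (by omega : ¬ i + 1 < k)]
          have : f i = w := by
            have : i = k - 1 := by omega
            rw [this, hl]
          rw [this]
          exact hstep

/-- The sign of an end: `+1` if its side is `true`, `-1` otherwise. -/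
def ttSgn (side : B × Bool → Bool) (e : B × Bool) : ℤ := if side e then 1 else -1

open Classical in
/-- The sign assigned to a switch: the sign of (the side of) a chosen exit end of a
reachable directed branch attached there, if any. -/
noncomputable def ttEps (att : B × Bool → S) (side : B × Bool → Bool)
    (R : B × Bool → Prop) (s : S) : ℤ :=
  if h : ∃ u, R u ∧ att (u.1, !u.2) = s then
    (if side (h.choose.1, !h.choose.2) then 1 else -1) else 1

lemma ttEps_vals (att : B × Bool → S) (side : B × Bool → Bool)
    (R : B × Bool → Prop) (s : S) :
    ttEps att side R s = 1 ∨ ttEps att side R s = -1 := by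
  unfold ttEps
  split
  · split <;> simp
  · left; rfl

open Classical in
/-- The contribution of an end `e` to the vector `V`. -/
noncomputable def ttF (att : B × Bool → S) (side : B × Bool → Bool)
    (R : B × Bool → Prop) (e : B × Bool) : ℤ :=
  if (∃ u, R u ∧ att (u.1, !u.2) = att e) then
    ttEps att side R (att e) * ttSgn side e else 0

lemma ttF_ge (att : B × Bool → S) (side : B × Bool → Bool)
    (R : B × Bool → Prop) (e : B × Bool) : -1 ≤ ttF att side R e := by
  unfold ttF ttSgn
  rcases ttEps_vals att side R (att e) with h | h <;> rw [h] <;> split <;>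
    first
    | omega
    | (split <;> omega)

lemma ttEps_spec {att : B × Bool → S} {side : B × Bool → Bool} {R : B × Bool → Prop}
    (hcons : ∀ u v, R u → R v → att (u.1, !u.2) = att (v.1, !v.2) →
      side (u.1, !u.2) = side (v.1, !v.2))
    (u : B × Bool) (hu : R u) :
    ttEps att side R (att (u.1, !u.2)) = ttSgn side (u.1, !u.2) := by
  have hP : ∃ w, R w ∧ att (w.1, !w.2) = att (u.1, !u.2) := ⟨u, hu, rfl⟩
  unfold ttEps
  rw [dif_pos hP]
  have hside := hcons hP.choose u hP.choose_spec.1 hu hP.choose_spec.2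
  rw [hside]
  rfl

lemma ttF_exit {att : B × Bool → S} {side : B × Bool → Bool} {R : B × Bool → Prop}
    (hcons : ∀ u v, R u → R v → att (u.1, !u.2) = att (v.1, !v.2) →
      side (u.1, !u.2) = side (v.1, !v.2))
    (u : B × Bool) (hu : R u) :
    ttF att side R (u.1, !u.2) = 1 := by
  have hP : ∃ w, R w ∧ att (w.1, !w.2) = att (u.1, !u.2) := ⟨u, hu, rfl⟩
  unfold ttF
  rw [if_pos hP, ttEps_spec hcons u hu]
  unfold ttSgn
  split <;> norm_num

lemma ttF_neg {att : B × Bool → S} {side : B × Bool → Bool} {R : B × Bool → Prop}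
    {e : B × Bool} (h : ttF att side R e < 0) :
    ∃ u, R u ∧ TTStep att side u e := by
  unfold ttF at h
  split at h
  · rename_i hP
    obtain ⟨hw1, hw2⟩ := hP.choose_spec
    refine ⟨hP.choose, hw1, hw2.symm, ?_⟩
    intro hside
    unfold ttEps at h
    rw [dif_pos hP] at h
    unfold ttSgn at h
    rw [hside] at h
    split at h <;> omega
  · omega

end ttaux

/-- Lemma 4.4.
If `b` is a branch of a combinatorial train track that is contained in no closed
train path, then there exist a nonempty set `T` of switches and signs
`ε : T → {−1, +1}` such that `V := Σ_{s ∈ T} ε s • L s` (a signed sum of rows of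
the incidence matrix `L`) has all coordinates nonnegative and satisfies
`V b ≥ 1`; in particular `V` is a nonzero nonnegative vector in the row space
of `L`. -/
theorem stmt_2 {B S : Type} [Fintype B] [Fintype S] [DecidableEq S]
    (att : B × Bool → S) (side : B × Bool → Bool)
    (L : S → B → ℤ)
    (hL : ∀ s b, L s b =
      ∑ e : Bool, (if att (b, e) = s then (if side (b, e) then (1 : ℤ) else -1) else 0))
    (b : B)
    (hb : ∀ (k : ℕ) (bs : ℕ → B) (ds : ℕ → Bool),
      IsClosedTrainPath att side k bs ds → ∀ i < k, bs i ≠ b) :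
    ∃ T : Finset S, T.Nonempty ∧
      ∃ ε : S → ℤ, (∀ s ∈ T, ε s = 1 ∨ ε s = -1) ∧
        (∀ b' : B, 0 ≤ ∑ s ∈ T, ε s * L s b') ∧
        1 ≤ ∑ s ∈ T, ε s * L s b := by
  classical
  -- A cycle through `b` yields a closed train path containing `b`, contradicting `hb`.
  have cyc : ∀ (d : Bool) (u : B × Bool),
      Relation.ReflTransGen (TTStep att side) (b, d) u → TTStep att side u (b, d) → False := by
    intro d u hr hs
    obtain ⟨k, f, hk, h0, hl, hsteps⟩ := ttpath_fun hr
    have hclosed : IsClosedTrainPath att side k (fun i => (f i).1) (fun i => (f i).2) := by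
      refine ⟨⟨hk, ?_⟩, ?_, ?_⟩
      · intro i hi
        have hstep := hsteps i hi
        exact ⟨by simpa using hstep.1, by simpa using hstep.2⟩
      · show att ((f 0).1, (f 0).2) = att ((f (k-1)).1, !(f (k-1)).2)
        rw [Prod.mk.eta, h0, hl]
        exact hs.1
      · show side ((f 0).1, (f 0).2) ≠ side ((f (k-1)).1, !(f (k-1)).2)
        rw [Prod.mk.eta, h0, hl]
        exact hs.2
    exact hb k _ _ hclosed 0 (by omega) (by rw [h0]) 
  -- choose a direction `d₀` such that `(b, !d₀)` is not reachable from `(b, d₀)`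
  have hd : ∃ d : Bool, ¬ Relation.ReflTransGen (TTStep att side) (b, d) (b, !d) := by
    by_contra h
    push_neg at h
    have h1 := h false
    have h2 := h true
    simp only [Bool.not_false, Bool.not_true] at h1 h2
    rcases Relation.ReflTransGen.cases_tail h2 with heq | ⟨u, hu1, hu2⟩
    · exact Bool.noConfusion (congrArg Prod.snd heq)
    · exact cyc false u (h1.trans hu1) hu2
  obtain ⟨d₀, hd₀⟩ := hd
  set R : B × Bool → Prop := fun u => Relation.ReflTransGen (TTStep att side) (b, d₀) u with hRdef
  have hRb : R (b, d₀) := Relation.ReflTransGen.refl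
  have hRclosed : ∀ u v, R u → TTStep att side u v → R v := fun u v hu hs => hu.tail hs
  -- no branch is reachable in both directions
  have no_both : ∀ c e, R (c, e) → R (c, !e) → False := by
    intro c e h1 h2
    have h3 : Relation.ReflTransGen (TTStep att side) (c, e) (b, !d₀) := by
      simpa using ttrtg_rev h2
    exact hd₀ (h1.trans h3)
  -- exit ends of reachable directed branches attached at the same switch have equal sides
  have hcons : ∀ u v, R u → R v → att (u.1, !u.2) = att (v.1, !v.2) →
      side (u.1, !u.2) = side (v.1, !v.2) := by
    intro u v hu hv hatt
    by_contra hside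
    have hstep : TTStep att side u (v.1, !v.2) := ⟨hatt.symm, fun hh => hside hh.symm⟩
    have h1 : R (v.1, !v.2) := hRclosed u _ hu hstep
    have h2 : R (v.1, v.2) := by rw [Prod.mk.eta]; exact hv
    exact no_both v.1 v.2 h2 h1
  -- the set of switches and the signs
  refine ⟨Finset.univ.filter (fun s => ∃ u, R u ∧ att (u.1, !u.2) = s),
    ⟨att (b, !d₀), Finset.mem_filter.2 ⟨Finset.mem_univ _, (b, d₀), hRb, rfl⟩⟩,
    ttEps att side R, fun s _ => ttEps_vals att side R s, ?_, ?_⟩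
  all_goals {
    have sum_eq : ∀ c : B, ∑ s ∈ Finset.univ.filter (fun s => ∃ u, R u ∧ att (u.1, !u.2) = s),
        ttEps att side R s * L s c = ttF att side R (c, false) + ttF att side R (c, true) := by
      intro c
      have step1 : ∀ s, ttEps att side R s * L s c =
          ∑ e : Bool, (if att (c, e) = s then ttEps att side R s * ttSgn side (c, e) else 0) := by
        intro s
        rw [hL s c, Finset.mul_sum]
        refine Finset.sum_congr rfl fun e _ => ?_
        rw [mul_ite, mul_zero]
        rfl
      calc ∑ s ∈ Finset.univ.filter (fun s => ∃ u, R u ∧ att (u.1, !u.2) = s),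
            ttEps att side R s * L s c
          = ∑ s ∈ Finset.univ.filter (fun s => ∃ u, R u ∧ att (u.1, !u.2) = s),
            ∑ e : Bool, (if att (c, e) = s then ttEps att side R s * ttSgn side (c, e) else 0) :=
            Finset.sum_congr rfl fun s _ => step1 s
        _ = ∑ e : Bool, ∑ s ∈ Finset.univ.filter (fun s => ∃ u, R u ∧ att (u.1, !u.2) = s),
            (if att (c, e) = s then ttEps att side R s * ttSgn side (c, e) else 0) :=
            Finset.sum_comm
        _ = ∑ e : Bool, ttF att side R (c, e) := by
            refine Finset.sum_congr rfl fun e _ => ?_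
            rw [Finset.sum_ite_eq]
            simp only [Finset.mem_filter, Finset.mem_univ, true_and]
            unfold ttF
            split <;> rfl
        _ = ttF att side R (c, false) + ttF att side R (c, true) := by
            rw [Fintype.sum_bool]; ring
    first
    | -- nonnegativity
      (intro c
       rw [sum_eq c]
       have key : ∀ e : Bool, ttF att side R (c, e) < 0 → ttF att side R (c, !e) = 1 := by
         intro e he
         obtain ⟨u, hu, hstep⟩ := ttF_neg he
         have hR : R (c, e) := hRclosed u (c, e) hu hstep
         have := ttF_exit hcons (c, e) hR
         simpa using this
       by_cases h1 : ttF att side R (c, false) < 0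
       · have := key false h1
         simp only [Bool.not_false] at this
         have := ttF_ge att side R (c, false)
         omega
       · by_cases h2 : ttF att side R (c, true) < 0
         · have := key true h2
           simp only [Bool.not_true] at this
           have := ttF_ge att side R (c, true)
           omega
         · omega)
    | -- positivity at b
      (rw [sum_eq b]
       have hexit : ttF att side R (b, !d₀) = 1 := by
         simpa using ttF_exit hcons (b, d₀) hRb
       have hentry : 0 ≤ ttF att side R (b, d₀) := by
         by_contra h
         push_neg at h
         obtain ⟨u, hu, hstep⟩ := ttF_neg h
         exact cyc d₀ u hu hstep
       have h1 : ttF att side R (b, d₀) + ttF att side R (b, !d₀) =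
           ttF att side R (b, false) + ttF att side R (b, true) := by
         cases hh : d₀ <;> simp only [Bool.not_false, Bool.not_true] <;> ring
       linarith [hexit, hentry, h1])
  }
end

section
/- Let a combinatorial train track be given and let b be a branch, with ends ε₁ = (b,0) and ε₂ = (b,1) attached at switches s₁ and s₂ respectively. For i ∈ {1,2}, say a train path emanates from the end εᵢ of b if its first branch-end e₁ is attached at sᵢ with side opposite to the side of εᵢ, and it never traverses b; call the family of all such train paths unidirectional if any two traversals of a common branch e, by one member or by two members of the family, use the same direction of traversal (the same ordered pair of ends of e). If b is contained in no closed train path, then for at least one i ∈ {1,2} the family of train paths emanating from the end εᵢ of b is unidirectional. (Lemma 4.3: otherwise two loops, one through each end of b, could be concatenated across b to produce a closed train path containing b.) -/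
/-- A train path emanates from the end `(b, e)` of the branch `b` if its first
branch-end is attached at the same switch as `(b, e)` with opposite side, and it
never traverses `b`. -/
def EmanatesFrom {B S : Type} (att : B × Bool → S) (side : B × Bool → Bool)
    (b : B) (e : Bool) (k : ℕ) (bs : ℕ → B) (ds : ℕ → Bool) : Prop :=
  IsTrainPath att side k bs ds ∧
  att (bs 0, ds 0) = att (b, e) ∧
  side (bs 0, ds 0) ≠ side (b, e) ∧
  ∀ i < k, bs i ≠ b

lemma returning_path {B S : Type} (att : B × Bool → S) (side : B × Bool → Bool)
    (b : B) (e : Bool) {k : ℕ} {bs : ℕ → B} {ds : ℕ → Bool}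
    {k' : ℕ} {bs' : ℕ → B} {ds' : ℕ → Bool}
    (hP : EmanatesFrom att side b e k bs ds) (hQ : EmanatesFrom att side b e k' bs' ds')
    {i i' : ℕ} (hi : i < k) (hi' : i' < k') (hbb : bs i = bs' i') (hdd : ds i ≠ ds' i') :
    ∃ (m : ℕ) (rs : ℕ → B) (es : ℕ → Bool),
      IsTrainPath att side m rs es ∧
      att (rs 0, es 0) = att (b, e) ∧ side (rs 0, es 0) ≠ side (b, e) ∧
      att (rs (m - 1), !(es (m - 1))) = att (b, e) ∧
      side (rs (m - 1), !(es (m - 1))) ≠ side (b, e) ∧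
      ∀ j < m, rs j ≠ b := by
  have hdd' : ds' i' = !(ds i) := by
    cases h1 : ds i <;> cases h2 : ds' i' <;> simp_all
  refine ⟨i + 1 + i',
    (fun j => if j ≤ i then bs j else bs' (i + i' - j)),
    (fun j => if j ≤ i then ds j else !(ds' (i + i' - j))), ?_, ?_, ?_, ?_, ?_, ?_⟩
  · refine ⟨by omega, fun j hj => ?_⟩
    rcases lt_trichotomy j i with hji | hji | hji
    · have h1 : j ≤ i := by omega
      have h2 : j + 1 ≤ i := by omega
      simp only [if_pos h1, if_pos h2]
      exact hP.1.2 j (by omega)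
    · subst hji
      have h1 : j ≤ j := le_refl j
      have h2 : ¬ (j + 1 ≤ j) := by omega
      have h3 : j + i' - (j + 1) = i' - 1 := by omega
      simp only [if_pos h1, if_neg h2, h3]
      have hi'1 : i' - 1 + 1 = i' := by omega
      have := hQ.1.2 (i' - 1) (by omega)
      rw [hi'1] at this
      rw [← hbb, hdd'] at this
      constructor
      · exact this.1.symm
      · exact fun h => this.2 h.symm
    · have h1 : ¬ (j ≤ i) := by omega
      have h2 : ¬ (j + 1 ≤ i) := by omega
      simp only [if_neg h1, if_neg h2]
      set t := i + i' - (j + 1) with ht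
      have h3 : i + i' - j = t + 1 := by omega
      rw [h3]
      have := hQ.1.2 t (by omega)
      simp only [Bool.not_not]
      constructor
      · exact this.1.symm
      · exact fun h => this.2 h.symm
  · simp only [if_pos (Nat.zero_le i)]
    exact hP.2.1
  · simp only [if_pos (Nat.zero_le i)]
    exact hP.2.2.1
  · have h0 : i + 1 + i' - 1 = i + i' := by omega
    rw [h0]
    rcases Nat.eq_zero_or_pos i' with h | h
    · subst h
      simp only [Nat.add_zero, if_pos (le_refl i)]
      rw [hbb]
      have : (!(ds i)) = ds' 0 := by rw [hdd']
      rw [this]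
      exact hQ.2.1
    · have h1 : ¬ (i + i' ≤ i) := by omega
      have h2 : i + i' - (i + i') = 0 := by omega
      simp only [if_neg h1, h2, Bool.not_not]
      exact hQ.2.1
  · have h0 : i + 1 + i' - 1 = i + i' := by omega
    rw [h0]
    rcases Nat.eq_zero_or_pos i' with h | h
    · subst h
      simp only [Nat.add_zero, if_pos (le_refl i)]
      rw [hbb]
      have : (!(ds i)) = ds' 0 := by rw [hdd']
      rw [this]
      exact hQ.2.2.1
    · have h1 : ¬ (i + i' ≤ i) := by omega
      have h2 : i + i' - (i + i') = 0 := by omega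
      simp only [if_neg h1, h2, Bool.not_not]
      exact hQ.2.2.1
  · intro j hj
    by_cases h1 : j ≤ i
    · simp only [if_pos h1]
      exact hP.2.2.2 j (by omega)
    · simp only [if_neg h1]
      exact hQ.2.2.2 _ (by omega)

lemma glue_closed {B S : Type} (att : B × Bool → S) (side : B × Bool → Bool) (b : B)
    {m : ℕ} {rs : ℕ → B} {es : ℕ → Bool} {m' : ℕ} {rs' : ℕ → B} {es' : ℕ → Bool}
    (hT : IsTrainPath att side m rs es)
    (hs : att (rs 0, es 0) = att (b, false)) (hss : side (rs 0, es 0) ≠ side (b, false))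
    (he : att (rs (m - 1), !(es (m - 1))) = att (b, false))
    (hes : side (rs (m - 1), !(es (m - 1))) ≠ side (b, false))
    (hT' : IsTrainPath att side m' rs' es')
    (hs' : att (rs' 0, es' 0) = att (b, true)) (hss' : side (rs' 0, es' 0) ≠ side (b, true))
    (he' : att (rs' (m' - 1), !(es' (m' - 1))) = att (b, true))
    (hes' : side (rs' (m' - 1), !(es' (m' - 1))) ≠ side (b, true)) :
    ∃ (K : ℕ) (cs : ℕ → B) (fs : ℕ → Bool),
      IsClosedTrainPath att side K cs fs ∧ ∃ j < K, cs j = b := by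
  obtain ⟨hm, hcond⟩ := hT
  obtain ⟨hm', hcond'⟩ := hT'
  refine ⟨m + m' + 2,
    (fun j => if j < m then rs j else if j = m then b
      else if j < m + 1 + m' then rs' (j - (m + 1)) else b),
    (fun j => if j < m then es j else if j = m then false
      else if j < m + 1 + m' then es' (j - (m + 1)) else true),
    ⟨⟨by omega, fun j hj => ?_⟩, ?_, ?_⟩, m, by omega, ?_⟩
  · rcases lt_trichotomy (j + 1) m with h1 | h1 | h1
    · have h2 : j < m := by omega
      simp only [if_pos h1, if_pos h2]
      exact hcond j (by omega)
    · -- j + 1 = m : entering b (direction false)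
      have h2 : j < m := by omega
      have h3 : ¬ (j + 1 < m) := by omega
      simp only [if_pos h2, if_neg h3, if_pos h1]
      have hj1 : j = m - 1 := by omega
      rw [hj1]
      exact ⟨he.symm, fun h => hes h.symm⟩
    · rcases lt_trichotomy j m with h2 | h2 | h2
      · omega
      · -- j = m : leaving b into rs'
        subst h2
        have h3 : ¬ (j < j) := by omega
        have h4 : ¬ (j + 1 < j) := by omega
        have h5 : j + 1 ≠ j := by omega
        have h6 : j + 1 < j + 1 + m' := by omega
        have h7 : j + 1 - (j + 1) = 0 := by omega
        simp only [if_pos rfl, if_neg h3, if_neg h4, if_neg h5, if_pos h6, h7]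
        exact ⟨hs', hss'⟩
      · -- j > m
        have h3 : ¬ (j < m) := by omega
        have h4 : j ≠ m := by omega
        have h5 : ¬ (j + 1 < m) := by omega
        have h6 : j + 1 ≠ m := by omega
        have h7 : j < m + 1 + m' := by omega
        simp only [if_neg h3, if_neg h4, if_pos h7, if_neg h5, if_neg h6]
        by_cases h8 : j + 1 < m + 1 + m'
        · -- inside rs'
          simp only [if_pos h8]
          have h9 : j + 1 - (m + 1) = (j - (m + 1)) + 1 := by omega
          rw [h9]
          exact hcond' (j - (m + 1)) (by omega)
        · -- j + 1 = m + 1 + m' : entering b (direction true)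
          have h9 : j - (m + 1) = m' - 1 := by omega
          simp only [if_neg h8, h9]
          exact ⟨he'.symm, fun h => hes' h.symm⟩
  · -- closing attachment
    have h1 : 0 < m := by omega
    have hK : m + m' + 2 - 1 = m + m' + 1 := by omega
    have h2 : ¬ (m + m' + 1 < m) := by omega
    have h3 : m + m' + 1 ≠ m := by omega
    have h4 : ¬ (m + m' + 1 < m + 1 + m') := by omega
    simp only [hK, if_pos h1, if_neg h2, if_neg h3, if_neg h4, Bool.not_true]
    exact hs
  · have h1 : 0 < m := by omega
    have hK : m + m' + 2 - 1 = m + m' + 1 := by omega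
    have h2 : ¬ (m + m' + 1 < m) := by omega
    have h3 : m + m' + 1 ≠ m := by omega
    have h4 : ¬ (m + m' + 1 < m + 1 + m') := by omega
    simp only [hK, if_pos h1, if_neg h2, if_neg h3, if_neg h4, Bool.not_true]
    exact hss
  · simp only [lt_irrefl, if_neg, if_pos rfl]
    simp

/-- Lemma 4.3.
If the branch `b` is contained in no closed train path, then for at least one of
the two ends `(b, e)` of `b`, the family of train paths emanating from `(b, e)`
is unidirectional: any two traversals of a common branch (by one member or by
two members of the family) use the same direction of traversal. -/
theorem stmt_3 {B S : Type} (att : B × Bool → S) (side : B × Bool → Bool) (b : B)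
    (hb : ∀ (k : ℕ) (bs : ℕ → B) (ds : ℕ → Bool),
      IsClosedTrainPath att side k bs ds → ∀ i < k, bs i ≠ b) :
    ∃ e : Bool,
      ∀ (k : ℕ) (bs : ℕ → B) (ds : ℕ → Bool) (k' : ℕ) (bs' : ℕ → B) (ds' : ℕ → Bool),
        EmanatesFrom att side b e k bs ds →
        EmanatesFrom att side b e k' bs' ds' →
        ∀ i < k, ∀ i' < k', bs i = bs' i' → ds i = ds' i' := by
  by_contra h
  push_neg at h
  obtain ⟨k0, bs0, ds0, k0', bs0', ds0', hP0, hQ0, i0, hi0, i0', hi0', hbb0, hdd0⟩ := h false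
  obtain ⟨k1, bs1, ds1, k1', bs1', ds1', hP1, hQ1, i1, hi1, i1', hi1', hbb1, hdd1⟩ := h true
  obtain ⟨m, rs, es, hT, hs, hss, he, hes, hnb⟩ :=
    returning_path att side b false hP0 hQ0 hi0 hi0' hbb0 hdd0
  obtain ⟨m', rs', es', hT', hs', hss', he', hes', hnb'⟩ :=
    returning_path att side b true hP1 hQ1 hi1 hi1' hbb1 hdd1
  obtain ⟨K, cs, fs, hclosed, j, hj, hcsj⟩ :=
    glue_closed att side b hT hs hss he hes hT' hs' hss' he' hes'
  exact hb K cs fs hclosed j hj hcsj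
end

section
/- Let a combinatorial train track be given. (a) For every closed train path γ = (b₁, …, b_k), the counting measure μ_γ : B → ℕ defined by μ_γ(b) = |{i : bᵢ = b}| satisfies the switch conditions; in particular μ_γ is a transverse measure that is positive on every branch traversed by γ. (b) Consequently, if b ∈ B is a branch such that every transverse measure μ satisfies μ(b) = 0 (an 'invisible' branch), then b is contained in no closed train path. (Lemma 4.2.) -/
/-- The counting measure of a train path of length `k`: it assigns to each branch
the number of times the path traverses it. -/
noncomputable def countingMeasure {B : Type} [DecidableEq B]
    (k : ℕ) (bs : ℕ → B) : B → ℝ :=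
  fun b => (((Finset.range k).filter fun i => bs i = b).card : ℝ)

/-- Lemma 4.2.
(a) For every closed train path `γ`, the counting measure `μ_γ` satisfies the
switch conditions (it lies in the kernel of the incidence matrix `L`); in
particular `μ_γ` is a transverse measure (nonnegative) which is strictly
positive on every branch traversed by `γ`.
(b) Consequently, if `b` is an invisible branch (every transverse measure
vanishes on `b`), then `b` is contained in no closed train path. -/
theorem stmt_4 {B S : Type} [Fintype B] [DecidableEq B] [DecidableEq S]
    (att : B × Bool → S) (side : B × Bool → Bool)
    (L : S → B → ℤ)
    (hL : ∀ s b, L s b =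
      ∑ e : Bool, (if att (b, e) = s then (if side (b, e) then (1 : ℤ) else -1) else 0)) :
    (∀ (k : ℕ) (bs : ℕ → B) (ds : ℕ → Bool),
      IsClosedTrainPath att side k bs ds →
        (∀ s, ∑ b, (L s b : ℝ) * countingMeasure k bs b = 0) ∧
        (∀ b, 0 ≤ countingMeasure k bs b) ∧
        (∀ b, (∃ i < k, bs i = b) → 0 < countingMeasure k bs b)) ∧
    (∀ b : B,
      (∀ μ : B → ℝ, (∀ b', 0 ≤ μ b') → (∀ s, ∑ b', (L s b' : ℝ) * μ b' = 0) → μ b = 0) →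
      ∀ (k : ℕ) (bs : ℕ → B) (ds : ℕ → Bool),
        IsClosedTrainPath att side k bs ds → ∀ i < k, bs i ≠ b) := by
  have main : ∀ (k : ℕ) (bs : ℕ → B) (ds : ℕ → Bool),
      IsClosedTrainPath att side k bs ds →
        (∀ s, ∑ b, (L s b : ℝ) * countingMeasure k bs b = 0) ∧
        (∀ b, 0 ≤ countingMeasure k bs b) ∧
        (∀ b, (∃ i < k, bs i = b) → 0 < countingMeasure k bs b) := by
    intro k bs ds hγ
    obtain ⟨⟨hk, hpath⟩, hcatt, hcside⟩ := hγ
    refine ⟨?_, ?_, ?_⟩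
    · intro s
      set h : ℕ → ℝ := fun i =>
        if att (bs i, ds i) = s then (if side (bs i, ds i) then 1 else -1) else 0 with hh
      set g : ℕ → ℝ := fun i =>
        if att (bs i, !ds i) = s then (if side (bs i, !ds i) then 1 else -1) else 0 with hg
      have key : ∀ a c : B × Bool, att a = att c → side a ≠ side c →
          ((if att a = s then (if side a then (1:ℝ) else -1) else 0)
           = - (if att c = s then (if side c then (1:ℝ) else -1) else 0)) := by
        intro a c hatt hside
        rw [hatt]
        by_cases h1 : att c = s
        · simp only [h1, if_pos]
          cases hsc : side c <;> cases hsa : side a <;> simp_all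
        · simp [h1]
      -- rewrite the sum as a sum over path indices
      have step1 : ∑ b, (L s b : ℝ) * countingMeasure k bs b
          = ∑ i ∈ Finset.range k, (h i + g i) := by
        have e1 : ∀ b, countingMeasure k bs b
            = ∑ i ∈ Finset.range k, (if bs i = b then (1:ℝ) else 0) := by
          intro b
          simp only [countingMeasure, Finset.card_filter, Nat.cast_sum]
          refine Finset.sum_congr rfl fun i _ => ?_
          split <;> · simp
        calc ∑ b, (L s b : ℝ) * countingMeasure k bs b
            = ∑ b, ∑ i ∈ Finset.range k, (if bs i = b then (L s b : ℝ) else 0) := by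
              refine Finset.sum_congr rfl fun b _ => ?_
              rw [e1 b, Finset.mul_sum]
              refine Finset.sum_congr rfl fun i _ => ?_
              by_cases hb : bs i = b <;> simp [hb]
          _ = ∑ i ∈ Finset.range k, ∑ b, (if bs i = b then (L s b : ℝ) else 0) :=
              Finset.sum_comm
          _ = ∑ i ∈ Finset.range k, (L s (bs i) : ℝ) := by
              refine Finset.sum_congr rfl fun i _ => ?_
              rw [Finset.sum_ite_eq (Finset.univ) (bs i) (fun b => (L s b : ℝ))]
              simp
          _ = ∑ i ∈ Finset.range k, (h i + g i) := by
              refine Finset.sum_congr rfl fun i _ => ?_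
              rw [hL s (bs i)]
              push_cast
              rw [Fintype.sum_bool]
              cases hdi : ds i <;> simp [hh, hg, hdi] <;> ring
      rw [step1]
      obtain ⟨n, rfl⟩ : ∃ n, k = n + 1 := ⟨k - 1, (Nat.succ_pred_eq_of_pos hk).symm⟩
      rw [Finset.sum_add_distrib, Finset.sum_range_succ' h n, Finset.sum_range_succ g n]
      have h0 : h 0 = - g n := by
        have := key (bs 0, ds 0) (bs n, !ds n) (by simpa using hcatt) (by simpa using hcside)
        simpa [hh, hg] using this
      have hstep : ∀ i < n, h (i + 1) = - g i := by
        intro i hi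
        obtain ⟨ha, hs⟩ := hpath i (by omega)
        have := key (bs (i+1), ds (i+1)) (bs i, !ds i) ha hs
        simpa [hh, hg] using this
      rw [Finset.sum_congr rfl (fun i hi => hstep i (Finset.mem_range.mp hi)), h0]
      rw [Finset.sum_neg_distrib]
      ring
    · intro b
      exact Nat.cast_nonneg _
    · intro b ⟨i, hi, hbi⟩
      have : i ∈ (Finset.range k).filter fun j => bs j = b :=
        Finset.mem_filter.mpr ⟨Finset.mem_range.mpr hi, hbi⟩
      have hpos : 0 < ((Finset.range k).filter fun j => bs j = b).card :=
        Finset.card_pos.mpr ⟨i, this⟩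
      simp only [countingMeasure]
      exact_mod_cast hpos
  refine ⟨main, ?_⟩
  intro b hinv k bs ds hγ i hi hbi
  obtain ⟨h1, h2, h3⟩ := main k bs ds hγ
  have hz : countingMeasure k bs b = 0 := hinv _ h2 h1
  have hp : 0 < countingMeasure k bs b := h3 b ⟨i, hi, hbi⟩
  linarith
end

section
/- Let m, n ≥ 1 and let L : Matrix (Fin m) (Fin n) ℝ. Suppose the kernel of L contains no vector all of whose coordinates are strictly positive. Then there exists δ > 0 such that for every u : Fin n → ℝ with all coordinates strictly positive, ‖L.mulVec u‖ ≥ δ · min_{i} u(i), where ‖·‖ is the Euclidean norm on ℝ^m. -/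
set_option maxHeartbeats 1000000 in
/-- qualitative statement from the proof of Lemma 4.1 of
Masur–Minsky.  Let `L` be a real `m × n` matrix (`m, n ≥ 1`) whose kernel
contains no entrywise strictly positive vector.  Then there is `δ > 0` such that
for every entrywise strictly positive `u : Fin n → ℝ`,
`‖L.mulVec u‖ ≥ δ · min_i u i`, where `‖·‖` is the Euclidean norm on `ℝ^m`. -/
theorem stmt_6 {m n : ℕ} (hm : 0 < m) (hn : 0 < n)
    (L : Matrix (Fin m) (Fin n) ℝ)
    (h : ¬ ∃ v : Fin n → ℝ, L.mulVec v = 0 ∧ ∀ i, 0 < v i) :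
    ∃ δ > (0 : ℝ), ∀ u : Fin n → ℝ, (∀ i, 0 < u i) →
      δ * (Finset.univ.inf' (Finset.univ_nonempty_iff.mpr ⟨⟨0, hn⟩⟩) u) ≤
        Real.sqrt (∑ s : Fin m, (L.mulVec u s) ^ 2) := by
  classical
  set q : (Fin n → ℝ) →ₗ[ℝ] (Fin m → ℝ) := L.mulVecLin with hq
  -- the open positive orthant
  set S : Set (Fin n → ℝ) := {v | ∀ i, 0 < v i} with hS
  have hSpi : S = Set.univ.pi fun _ : Fin n => Set.Ioi (0 : ℝ) := by
    ext v; simp [hS, Set.mem_pi]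
  have hSconv : Convex ℝ S := by
    rw [hSpi]; exact convex_pi fun i _ => convex_Ioi 0
  have hSopen : IsOpen S := by
    rw [hSpi]; exact isOpen_set_pi Set.finite_univ fun i _ => isOpen_Ioi
  have hker : Convex ℝ ((LinearMap.ker q : Submodule ℝ (Fin n → ℝ)) : Set (Fin n → ℝ)) :=
    (LinearMap.ker q).convex
  have hdisj : Disjoint S ((LinearMap.ker q : Submodule ℝ (Fin n → ℝ)) : Set (Fin n → ℝ)) := by
    rw [Set.disjoint_left]
    intro v hv hv'
    exact h ⟨v, by simpa [hq, Matrix.mulVecLin_apply] using hv', hv⟩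
  obtain ⟨f, u0, hfs, hft⟩ := geometric_hahn_banach_open hSconv hSopen hker hdisj
  -- f vanishes on the kernel
  have hker0 : ∀ w ∈ LinearMap.ker q, f w = 0 := by
    intro w hw
    by_contra hfw
    have ht : ((u0 - 1) / f w) • w ∈ LinearMap.ker q := Submodule.smul_mem _ _ hw
    have := hft _ ht
    rw [map_smul] at this
    simp only [smul_eq_mul] at this
    rw [div_mul_cancel₀ _ hfw] at this
    linarith
  have hu0 : u0 ≤ 0 := by
    have := hft 0 (Submodule.zero_mem _)
    simpa using this
  -- f is nonpositive on basis vectors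
  have hsingle : ∀ i : Fin n, f (Pi.single i 1) ≤ 0 := by
    intro i
    set a := f (Pi.single i 1) with ha
    set b := f (fun _ => (1 : ℝ)) with hb
    have key : ∀ ε : ℝ, 0 < ε → a + ε * b < u0 := by
      intro ε hε
      have hmem : (Pi.single i 1 + ε • fun _ => (1 : ℝ)) ∈ S := by
        intro j
        simp only [Pi.add_apply, Pi.smul_apply, smul_eq_mul, mul_one]
        rcases eq_or_ne i j with rfl | hij
        · simp; linarith
        · rw [Pi.single_eq_of_ne (Ne.symm hij)]; simpa using hε
      have := hfs _ hmem
      rw [map_add, map_smul] at this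
      simpa [ha, hb, smul_eq_mul] using this
    by_contra hpos
    push_neg at hpos
    rcases le_or_gt 0 b with hb0 | hb0
    · have := key 1 one_pos
      nlinarith
    · have hε : 0 < a / (2 * (-b)) := div_pos hpos (by linarith)
      have hkey := key (a / (2 * (-b))) hε
      have hbne : b ≠ 0 := ne_of_lt hb0
      have hεb : (a / (2 * (-b))) * b = -(a / 2) := by
        field_simp
      rw [hεb] at hkey
      linarith
  -- the nonnegative coefficient vector c
  set c : Fin n → ℝ := fun i => -(f (Pi.single i 1)) with hc
  have hcnonneg : ∀ i, 0 ≤ c i := fun i => by simpa [hc] using hsingle i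
  have hf_eq : ∀ v : Fin n → ℝ, f v = -∑ i, v i * c i := by
    intro v
    have hv : v = ∑ i, v i • (Pi.single i 1 : Fin n → ℝ) := by
      funext j
      rw [Finset.sum_apply]
      simp [Pi.single_apply]
    conv_lhs => rw [hv]
    rw [map_sum, ← Finset.sum_neg_distrib]
    refine Finset.sum_congr rfl fun i _ => ?_
    rw [map_smul]
    simp [hc, smul_eq_mul]
  -- c is not identically zero
  have hcsum : 0 < ∑ i, c i := by
    by_contra hle
    push_neg at hle
    have hzero : ∀ i, c i = 0 := by
      intro i
      have h1 : ∑ i, c i = 0 :=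
        le_antisymm hle (Finset.sum_nonneg fun i _ => hcnonneg i)
      exact (Finset.sum_eq_zero_iff_of_nonneg fun i _ => hcnonneg i).mp h1 i (Finset.mem_univ i)
    have hones : (fun _ : Fin n => (1 : ℝ)) ∈ S := fun i => one_pos
    have := hfs _ hones
    rw [hf_eq] at this
    simp [hzero] at this
    linarith
  -- define the linear functional C = -f and factor through q
  set C : (Fin n → ℝ) →ₗ[ℝ] ℝ := -(f.toLinearMap) with hC
  have hCapply : ∀ v, C v = ∑ i, v i * c i := by
    intro v; simp [hC, hf_eq v]
  have hle : LinearMap.ker q ≤ LinearMap.ker C := by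
    intro w hw
    rw [LinearMap.mem_ker]
    simp [hC, hker0 w hw]
  obtain ⟨g, hg⟩ := LinearMap.exists_extend
    ((LinearMap.ker q).liftQ C hle ∘ₗ (q.quotKerEquivRange.symm : LinearMap.range q →ₗ[ℝ] _))
  have hfact : ∀ v, g (q v) = C v := by
    intro v
    have h1 : (⟨q v, LinearMap.mem_range_self q v⟩ : LinearMap.range q)
        = (LinearMap.range q).subtype ⟨q v, LinearMap.mem_range_self q v⟩ := rfl
    have h2 : g (q v) = g ((LinearMap.range q).subtype ⟨q v, LinearMap.mem_range_self q v⟩) := rfl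
    rw [h2, ← LinearMap.comp_apply, hg]
    rw [LinearMap.comp_apply]
    have h3 : q.quotKerEquivRange.symm ⟨q v, LinearMap.mem_range_self q v⟩
        = (LinearMap.ker q).mkQ v := q.quotKerEquivRange_symm_apply_image v _
    rw [LinearEquiv.coe_coe, h3]
    exact Submodule.liftQ_apply _ _ _
  -- the bound for g
  set K : ℝ := ∑ s : Fin m, |g (Pi.single s 1)| with hK
  have hKnonneg : 0 ≤ K := Finset.sum_nonneg fun s _ => abs_nonneg _
  have hgbound : ∀ w : Fin m → ℝ, |g w| ≤ K * Real.sqrt (∑ s, (w s) ^ 2) := by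
    intro w
    have hw : w = ∑ s, w s • (Pi.single s 1 : Fin m → ℝ) := by
      funext j
      rw [Finset.sum_apply]
      simp [Pi.single_apply]
    have hsq : ∀ s : Fin m, |w s| ≤ Real.sqrt (∑ t, (w t) ^ 2) := by
      intro s
      rw [← Real.sqrt_sq_eq_abs]
      apply Real.sqrt_le_sqrt
      exact Finset.single_le_sum (f := fun t => (w t) ^ 2) (fun t _ => sq_nonneg _)
        (Finset.mem_univ s)
    calc |g w| = |∑ s, w s * g (Pi.single s 1)| := by
          conv_lhs => rw [hw]
          rw [map_sum]
          simp [smul_eq_mul]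
      _ ≤ ∑ s, |w s * g (Pi.single s 1)| := Finset.abs_sum_le_sum_abs _ _
      _ ≤ ∑ s, Real.sqrt (∑ t, (w t) ^ 2) * |g (Pi.single s 1)| := by
          refine Finset.sum_le_sum fun s _ => ?_
          rw [abs_mul]
          exact mul_le_mul_of_nonneg_right (hsq s) (abs_nonneg _)
      _ = K * Real.sqrt (∑ t, (w t) ^ 2) := by
          rw [← Finset.mul_sum, hK, mul_comm]
  -- conclude
  refine ⟨(∑ i, c i) / (K + 1), by positivity, fun u hu => ?_⟩
  set μ : ℝ := Finset.univ.inf' (Finset.univ_nonempty_iff.mpr ⟨⟨0, hn⟩⟩) u with hμ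
  have hμle : ∀ i, μ ≤ u i := fun i => Finset.inf'_le _ (Finset.mem_univ i)
  have hμpos : 0 < μ := by
    obtain ⟨i, _, hi⟩ := Finset.exists_mem_eq_inf' (Finset.univ_nonempty_iff.mpr ⟨⟨0, hn⟩⟩) u
    rw [hμ, hi]; exact hu i
  have hCu : (∑ i, c i) * μ ≤ C u := by
    rw [hCapply, Finset.sum_mul]
    refine Finset.sum_le_sum fun i _ => ?_
    rw [mul_comm (u i)]
    exact mul_le_mul_of_nonneg_left (hμle i) (hcnonneg i)
  have hqu : q u = L.mulVec u := by simp [hq, Matrix.mulVecLin_apply]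
  have hCg : C u ≤ K * Real.sqrt (∑ s, (L.mulVec u s) ^ 2) := by
    calc C u = g (q u) := (hfact u).symm
      _ ≤ |g (q u)| := le_abs_self _
      _ ≤ K * Real.sqrt (∑ s, ((q u) s) ^ 2) := hgbound _
      _ = K * Real.sqrt (∑ s, (L.mulVec u s) ^ 2) := by rw [hqu]
  have hsqrt : 0 ≤ Real.sqrt (∑ s, (L.mulVec u s) ^ 2) := Real.sqrt_nonneg _
  rw [div_mul_eq_mul_div, div_le_iff₀ (by linarith : (0:ℝ) < K + 1)]
  calc (∑ i, c i) * μ ≤ C u := hCu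
    _ ≤ K * Real.sqrt (∑ s, (L.mulVec u s) ^ 2) := hCg
    _ ≤ (K + 1) * Real.sqrt (∑ s, (L.mulVec u s) ^ 2) := by nlinarith
    _ = Real.sqrt (∑ s, (L.mulVec u s) ^ 2) * (K + 1) := mul_comm _ _
end

section
/- Let G be a connected simple graph with vertex set V and graph metric dist_G, let N ∈ ℕ, and let A₀, …, A_N and B₀, …, B_N be subsets of V such that: (i) A_{j+1} ⊆ B_j for all 0 ≤ j < N, and (ii) for all 0 ≤ j ≤ N, every vertex at graph distance at most 1 from some vertex of B_j belongs to A_j. Suppose v_j ∈ A_j \ B_j for each 0 ≤ j ≤ N. Then dist_G(v_j, v_k) ≥ |j − k| for all 0 ≤ j, k ≤ N. -/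
/-- abstract nesting argument from the proof of Theorem 1.1.
Let `G` be a connected simple graph with graph metric `G.dist`, let `N : ℕ`, and
let `A 0, …, A N` and `Bs 0, …, Bs N` be vertex subsets such that
(i) `A (j+1) ⊆ Bs j` for all `j < N`, and
(ii) for all `j ≤ N`, every vertex at graph distance at most `1` from some vertex
of `Bs j` belongs to `A j`.
If `v j ∈ A j \ Bs j` for each `j ≤ N`, then `G.dist (v j) (v k) ≥ |j − k|`
for all `j, k ≤ N`. -/
theorem stmt_7 {V : Type} (G : SimpleGraph V) (hG : G.Connected) (N : ℕ)
    (A Bs : ℕ → Set V)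
    (hnest : ∀ j < N, A (j + 1) ⊆ Bs j)
    (hnbhd : ∀ j ≤ N, ∀ v w : V, w ∈ Bs j → G.dist v w ≤ 1 → v ∈ A j)
    (v : ℕ → V) (hv : ∀ j ≤ N, v j ∈ A j \ Bs j) :
    ∀ j ≤ N, ∀ k ≤ N, |(j : ℤ) - (k : ℤ)| ≤ (G.dist (v j) (v k) : ℤ) := by
  -- Bs (m+1) ⊆ Bs m for m + 1 ≤ N
  have hBstep : ∀ m, m + 1 ≤ N → Bs (m + 1) ⊆ Bs m := by
    intro m hm x hx
    exact hnest m hm (hnbhd (m + 1) hm x x hx (by rw [SimpleGraph.dist_self]; omega))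
  have hBchain : ∀ j k, j ≤ k → k ≤ N → Bs k ⊆ Bs j := by
    intro j k hjk
    induction k with
    | zero => intro _; simp [Nat.le_zero.mp hjk]
    | succ m ih =>
      intro hmN
      rcases Nat.lt_or_ge j (m + 1) with h | h
      · exact (hBstep m hmN).trans (ih (Nat.lt_succ_iff.mp h) (Nat.le_of_succ_le hmN))
      · have : j = m + 1 := le_antisymm hjk h
        simp [this]
  -- key claim
  have key : ∀ t j, j + t ≤ N → ∀ w ∈ Bs (j + t), t + 1 ≤ G.dist (v j) w := by
    intro t
    induction t with
    | zero =>
      intro j hj w hw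
      have hne : v j ≠ w := by
        intro h; exact (hv j (by simpa using hj)).2 (h ▸ hw)
      have := (hG.dist_eq_zero_iff (u := v j) (v := w)).not
      have : G.dist (v j) w ≠ 0 := by
        intro h0
        exact hne ((hG.dist_eq_zero_iff).mp h0)
      omega
    | succ t ih =>
      intro j hj w hw
      set d := G.dist (v j) w with hd
      have hne : v j ≠ w := by
        intro h
        have : w ∈ Bs j := hBchain j (j + (t + 1)) (by omega) hj hw
        exact (hv j (by omega)).2 (h ▸ this)
      have hdpos : d ≠ 0 := by
        intro h0; exact hne (hG.dist_eq_zero_iff.mp h0)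
      obtain ⟨p, hp⟩ := (hG (w) (v j)).exists_walk_length_eq_dist
      have hplen : p.length = d := by rw [hp, SimpleGraph.dist_comm]
      cases p with
      | nil => simp at hplen; exact absurd hplen.symm hdpos
      | cons hadj q =>
        rename_i u
        have hq : q.length = d - 1 := by simp at hplen; omega
        have hdu : G.dist (v j) u ≤ d - 1 := by
          rw [SimpleGraph.dist_comm]
          calc G.dist u (v j) ≤ q.length := SimpleGraph.dist_le q
            _ = d - 1 := hq
        have huA : u ∈ A (j + (t + 1)) := by
          apply hnbhd (j + (t + 1)) hj u w hw
          have : G.dist u w = 1 := SimpleGraph.dist_eq_one_iff_adj.mpr hadj.symm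
          omega
        have huB : u ∈ Bs (j + t) := by
          have := hnest (j + t) (by omega)
          exact this huA
        have := ih j (by omega) u huB
        omega
  -- main conclusion
  intro j hj k hk
  rcases Nat.lt_trichotomy j k with h | h | h
  · have hk1 : k - 1 + 1 = k := by omega
    have hvk : v k ∈ Bs (j + (k - 1 - j)) := by
      have : v k ∈ A k := (hv k hk).1
      have hA : v k ∈ Bs (k - 1) := by
        apply hnest (k - 1) (by omega)
        rw [hk1]; exact this
      have : j + (k - 1 - j) = k - 1 := by omega
      rw [this]; exact hA
    have := key (k - 1 - j) j (by omega) (v k) hvk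
    have habs : |(j : ℤ) - k| = (k : ℤ) - j := by
      rw [abs_sub_comm]; exact abs_of_nonneg (by omega)
    omega
  · simp [h]
  · have hj1 : j - 1 + 1 = j := by omega
    have hvj : v j ∈ Bs (k + (j - 1 - k)) := by
      have : v j ∈ A j := (hv j hj).1
      have hA : v j ∈ Bs (j - 1) := by
        apply hnest (j - 1) (by omega)
        rw [hj1]; exact this
      have : k + (j - 1 - k) = j - 1 := by omega
      rw [this]; exact hA
    have := key (j - 1 - k) k (by omega) (v j) hvj
    rw [SimpleGraph.dist_comm] at this
    have habs : |(j : ℤ) - k| = (j : ℤ) - k := abs_of_nonneg (by omega)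
    omega
end

section
/- Let G be a connected simple graph with graph metric dist_G, let C ≥ 1 be a real number, let N ∈ ℕ, and let A₀, …, A_N, B₀, …, B_N be vertex subsets with A_{j+1} ⊆ B_j for all j < N and with every vertex at graph distance at most 1 from B_j lying in A_j for all j ≤ N. Suppose v_j ∈ A_j \ B_j for each j, and additionally dist_G(v_j, v_{j+1}) ≤ C for all j < N. Then |j − k| ≤ dist_G(v_j, v_k) ≤ C·|j − k| for all 0 ≤ j, k ≤ N; in particular the map j ↦ v_j is a C-quasi-isometric embedding of the integer interval {0, …, N} into G. -/
/-- abstract core of Theorem 1.1.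
Let `G` be a connected simple graph with graph metric `G.dist`, `C ≥ 1` a real
number, `N : ℕ`, and `A 0, …, A N`, `Bs 0, …, Bs N` vertex subsets with
`A (j+1) ⊆ Bs j` for `j < N` and with every vertex at graph distance at most `1`
from `Bs j` lying in `A j` for `j ≤ N`.  If `v j ∈ A j \ Bs j` for each `j ≤ N`
and moreover `G.dist (v j) (v (j+1)) ≤ C` for all `j < N`, then
`|j − k| ≤ G.dist (v j) (v k) ≤ C·|j − k|` for all `j, k ≤ N`; in particular
`j ↦ v j` is a `C`-quasi-isometric embedding of `{0, …, N}` into `G`. -/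
theorem stmt_8 {V : Type} (G : SimpleGraph V) (hG : G.Connected)
    (C : ℝ) (hC : 1 ≤ C) (N : ℕ)
    (A Bs : ℕ → Set V)
    (hnest : ∀ j < N, A (j + 1) ⊆ Bs j)
    (hnbhd : ∀ j ≤ N, ∀ v w : V, w ∈ Bs j → G.dist v w ≤ 1 → v ∈ A j)
    (v : ℕ → V) (hv : ∀ j ≤ N, v j ∈ A j \ Bs j)
    (hstep : ∀ j < N, (G.dist (v j) (v (j + 1)) : ℝ) ≤ C) :
    ∀ j ≤ N, ∀ k ≤ N,
      (|(j : ℝ) - (k : ℝ)| ≤ (G.dist (v j) (v k) : ℝ) ∧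
        (G.dist (v j) (v k) : ℝ) ≤ C * |(j : ℝ) - (k : ℝ)|) ∧
      ((1 / C) * |(j : ℝ) - (k : ℝ)| - C ≤ (G.dist (v j) (v k) : ℝ) ∧
        (G.dist (v j) (v k) : ℝ) ≤ C * |(j : ℝ) - (k : ℝ)| + C) := by
  have hC0 : (0 : ℝ) < C := lt_of_lt_of_le one_pos hC
  -- every vertex admitting a walk of length ≤ m to `v k` lies in `A (k - m)`
  have key : ∀ k ≤ N, ∀ x w : V, ∀ p : G.Walk x w, w ∈ A k → p.length ≤ k →
      x ∈ A (k - p.length) := by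
    intro k hk x w p
    induction p with
    | nil => intro hw _; simpa using hw
    | @cons a b c hab q ih =>
      intro hw hlen
      simp only [SimpleGraph.Walk.length_cons] at hlen ⊢
      have hql : q.length ≤ k := by omega
      have hb : b ∈ A (k - q.length) := ih hw hql
      have h1 : 1 ≤ k - q.length := by omega
      have hBs : b ∈ Bs (k - q.length - 1) := by
        have he : k - q.length - 1 + 1 = k - q.length := by omega
        exact hnest (k - q.length - 1) (by omega) (by rw [he]; exact hb)
      have hd : G.dist a b ≤ 1 := by
        simpa using SimpleGraph.dist_le (SimpleGraph.Walk.cons hab SimpleGraph.Walk.nil)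
      have : a ∈ A (k - q.length - 1) :=
        hnbhd (k - q.length - 1) (by omega) a b hBs hd
      have he2 : k - (q.length + 1) = k - q.length - 1 := by omega
      rwa [he2]
  -- chain: A i ⊆ Bs j for j < i ≤ N
  have chain : ∀ j : ℕ, ∀ i : ℕ, j < i → i ≤ N → A i ⊆ Bs j := by
    intro j i
    induction i with
    | zero => intro h; exact absurd h (Nat.not_lt_zero j)
    | succ i ih =>
      intro hji hiN x hx
      by_cases h : j = i
      · subst h; exact hnest j (by omega) hx
      · have hx1 : x ∈ Bs i := hnest i (by omega) hx
        have hx2 : x ∈ A i := hnbhd i (by omega) x x hx1 (by rw [SimpleGraph.dist_self]; omega)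
        exact ih (by omega) (by omega) hx2
  -- lower bound
  have lower : ∀ j k : ℕ, j ≤ k → k ≤ N → k - j ≤ G.dist (v j) (v k) := by
    intro j k hjk hkN
    by_contra h
    push_neg at h
    obtain ⟨p, hp⟩ := hG.exists_walk_length_eq_dist (v j) (v k)
    have hpl : p.length ≤ k := by omega
    have hmem : v j ∈ A (k - p.length) := key k hkN (v j) (v k) p (hv k hkN).1 hpl
    have hjlt : j < k - p.length := by omega
    have : v j ∈ Bs j := chain j (k - p.length) hjlt (by omega) hmem
    exact (hv j (le_trans hjk hkN)).2 this
  -- upper bound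
  have upper : ∀ j k : ℕ, j ≤ k → k ≤ N →
      (G.dist (v j) (v k) : ℝ) ≤ C * ((k : ℝ) - j) := by
    intro j k hjk hkN
    induction k, hjk using Nat.le_induction with
    | base => simp
    | succ k hjk ih =>
      have ih' := ih (by omega)
      have htri : G.dist (v j) (v (k + 1)) ≤ G.dist (v j) (v k) + G.dist (v k) (v (k + 1)) :=
        hG.dist_triangle
      have hs := hstep k (by omega)
      have : (G.dist (v j) (v (k + 1)) : ℝ) ≤ (G.dist (v j) (v k) : ℝ) + C := by
        calc (G.dist (v j) (v (k + 1)) : ℝ) ≤ (G.dist (v j) (v k) : ℝ) + (G.dist (v k) (v (k + 1)) : ℝ) := by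
              exact_mod_cast htri
          _ ≤ (G.dist (v j) (v k) : ℝ) + C := by linarith
      push_cast
      push_cast at ih'
      linarith
  -- combine, wlog-style
  have main : ∀ j ≤ N, ∀ k ≤ N, j ≤ k →
      |(j : ℝ) - (k : ℝ)| ≤ (G.dist (v j) (v k) : ℝ) ∧
      (G.dist (v j) (v k) : ℝ) ≤ C * |(j : ℝ) - (k : ℝ)| := by
    intro j hj k hk hjk
    have habs : |(j : ℝ) - (k : ℝ)| = (k : ℝ) - j := by
      rw [abs_sub_comm, abs_of_nonneg (by exact_mod_cast sub_nonneg.2 (by exact_mod_cast hjk : (j:ℝ) ≤ k))]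
    have hl := lower j k hjk hk
    have hu := upper j k hjk hk
    constructor
    · rw [habs]
      have : ((k - j : ℕ) : ℝ) ≤ (G.dist (v j) (v k) : ℝ) := by exact_mod_cast hl
      have hcast : ((k - j : ℕ) : ℝ) = (k : ℝ) - j := by
        push_cast [Nat.cast_sub hjk]; ring
      linarith [hcast ▸ this]
    · rw [habs]; exact hu
  intro j hj k hk
  have hfirst : |(j : ℝ) - (k : ℝ)| ≤ (G.dist (v j) (v k) : ℝ) ∧
      (G.dist (v j) (v k) : ℝ) ≤ C * |(j : ℝ) - (k : ℝ)| := by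
    rcases le_total j k with h | h
    · exact main j hj k hk h
    · have := main k hk j hj h
      rwa [SimpleGraph.dist_comm, abs_sub_comm] at this
  refine ⟨hfirst, ?_, ?_⟩
  · have habs : 0 ≤ |(j : ℝ) - (k : ℝ)| := abs_nonneg _
    have h1 : (1 / C) * |(j : ℝ) - (k : ℝ)| ≤ |(j : ℝ) - (k : ℝ)| := by
      have : 1 / C ≤ 1 := by
        rw [div_le_one hC0]; exact hC
      nlinarith
    linarith [hfirst.1]
  · linarith [hfirst.2]
end
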